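/- arXiv:2506.14420 — 6 statements merged into one kernel-verified Lean document; each statement's English description precedes it below -/
import Mathlib

section
/- Let λ ≥ 1. Then I(S;Z) ≤ I_SD3(λ), i.e. the SD3 density-deviation objective is bounded below by the mutual information between states and skills. -/
open Finset Real

/-- For `λ ≥ 1`, the SD3 density-deviation objective is bounded below by the
mutual information between states and skills: `I(S;Z) ≤ I_SD3(λ)`. -/
theorem sd3_ge_mutual_information
    {Z S : Type*} [Fintype Z] [Fintype S] [Nonempty Z] [Nonempty S] [DecidableEq Z]
    (p : Z → ℝ) (d : Z → S → ℝ)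
    (hp_pos : ∀ z, 0 < p z) (hp_sum : ∑ z, p z = 1)
    (hd_nonneg : ∀ z s, 0 ≤ d z s) (hd_sum : ∀ z, ∑ s, d z s = 1)
    (lam : ℝ) (hlam : 1 ≤ lam) :
    (∑ z, ∑ s, p z * d z s * Real.log (d z s / ∑ z', d z' s * p z')) ≤
      ∑ z, ∑ s, p z * d z s *
        Real.log ((lam * d z s) /
          (lam * d z s * p z + ∑ z' ∈ Finset.univ \ {z}, d z' s * p z')) := by
  apply Finset.sum_le_sum
  intro z _
  apply Finset.sum_le_sum
  intro s _
  rcases eq_or_lt_of_le (hd_nonneg z s) with h | h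
  · simp [← h]
  · set R := ∑ z' ∈ Finset.univ \ {z}, d z' s * p z' with hR
    have hRnn : 0 ≤ R :=
      Finset.sum_nonneg fun z' _ => mul_nonneg (hd_nonneg _ _) (hp_pos _).le
    have hD : ∑ z', d z' s * p z' = R + d z s * p z := by
      rw [hR, Finset.sdiff_singleton_eq_erase, add_comm]
      exact (Finset.add_sum_erase _ (fun z' => d z' s * p z') (Finset.mem_univ z)).symm
    have hpz := hp_pos z
    have hlam0 : 0 < lam := lt_of_lt_of_le one_pos hlam
    have hden1 : 0 < R + d z s * p z := by positivity
    have hden2 : 0 < lam * d z s * p z + R := by positivity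
    apply mul_le_mul_of_nonneg_left _ (mul_nonneg hpz.le h.le)
    rw [hD]
    apply Real.log_le_log (by positivity)
    rw [div_le_div_iff₀ hden1 hden2]
    nlinarith [mul_nonneg (mul_nonneg (sub_nonneg.2 hlam) h.le) hRnn]
end

section
/- Let λ ≥ 1. Then I_SD3(λ) ≤ log λ + I(S;Z), i.e. the SD3 density-deviation objective exceeds the mutual information between states and skills by at most log λ. -/
open Finset Real

/-- For `λ ≥ 1`, the SD3 density-deviation objective exceeds the mutual
information between states and skills by at most `log λ`:
`I_SD3(λ) ≤ log λ + I(S;Z)`. -/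
theorem sd3_le_log_add_mutual_information
    {Z S : Type*} [Fintype Z] [Fintype S] [Nonempty Z] [Nonempty S] [DecidableEq Z]
    (p : Z → ℝ) (d : Z → S → ℝ)
    (hp_pos : ∀ z, 0 < p z) (hp_sum : ∑ z, p z = 1)
    (hd_nonneg : ∀ z s, 0 ≤ d z s) (hd_sum : ∀ z, ∑ s, d z s = 1)
    (lam : ℝ) (hlam : 1 ≤ lam) :
    (∑ z, ∑ s, p z * d z s *
        Real.log ((lam * d z s) /
          (lam * d z s * p z + ∑ z' ∈ Finset.univ \ {z}, d z' s * p z'))) ≤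
      Real.log lam +
        ∑ z, ∑ s, p z * d z s * Real.log (d z s / ∑ z', d z' s * p z') := by
  have hlam0 : (0:ℝ) < lam := lt_of_lt_of_le one_pos hlam
  have key : ∀ z s, p z * d z s *
      Real.log ((lam * d z s) /
        (lam * d z s * p z + ∑ z' ∈ Finset.univ \ {z}, d z' s * p z')) ≤
      p z * d z s * (Real.log lam + Real.log (d z s / ∑ z', d z' s * p z')) := by
    intro z s
    rcases eq_or_lt_of_le (hd_nonneg z s) with h0 | hd
    · simp [← h0]
    · have hrest : 0 ≤ ∑ z' ∈ Finset.univ \ {z}, d z' s * p z' :=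
        Finset.sum_nonneg fun z' _ => mul_nonneg (hd_nonneg z' s) (hp_pos z').le
      have hTsplit : (∑ z', d z' s * p z')
          = d z s * p z + ∑ z' ∈ Finset.univ \ {z}, d z' s * p z' := by
        rw [← Finset.sum_sdiff (Finset.subset_univ {z}), Finset.sum_singleton, add_comm]
      have hTpos : 0 < ∑ z', d z' s * p z' := by
        rw [hTsplit]
        exact add_pos_of_pos_of_nonneg (mul_pos hd (hp_pos z)) hrest
      have hDge : (∑ z', d z' s * p z') ≤
          lam * d z s * p z + ∑ z' ∈ Finset.univ \ {z}, d z' s * p z' := by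
        rw [hTsplit]
        have : d z s * p z ≤ lam * d z s * p z := by nlinarith [mul_pos hd (hp_pos z), hlam]
        linarith
      have hDpos : 0 < lam * d z s * p z + ∑ z' ∈ Finset.univ \ {z}, d z' s * p z' :=
        lt_of_lt_of_le hTpos hDge
      have hnum : 0 < lam * d z s := mul_pos hlam0 hd
      have hlog : Real.log ((lam * d z s) /
            (lam * d z s * p z + ∑ z' ∈ Finset.univ \ {z}, d z' s * p z')) ≤
          Real.log lam + Real.log (d z s / ∑ z', d z' s * p z') := by
        have h1 : (lam * d z s) /
            (lam * d z s * p z + ∑ z' ∈ Finset.univ \ {z}, d z' s * p z') ≤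
            (lam * d z s) / (∑ z', d z' s * p z') := by
          gcongr
        calc Real.log _ ≤ Real.log ((lam * d z s) / (∑ z', d z' s * p z')) :=
              Real.log_le_log (div_pos hnum hDpos) h1
          _ = Real.log lam + Real.log (d z s / ∑ z', d z' s * p z') := by
              rw [mul_div_assoc, Real.log_mul hlam0.ne' (div_pos hd hTpos).ne']
      exact mul_le_mul_of_nonneg_left hlog (mul_nonneg (hp_pos z).le hd.le)
  have hsum1 : ∑ z, ∑ s, p z * d z s = 1 := by
    simp_rw [← Finset.mul_sum, hd_sum, mul_one, hp_sum]
  calc (∑ z, ∑ s, p z * d z s *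
        Real.log ((lam * d z s) /
          (lam * d z s * p z + ∑ z' ∈ Finset.univ \ {z}, d z' s * p z')))
      ≤ ∑ z, ∑ s, p z * d z s *
          (Real.log lam + Real.log (d z s / ∑ z', d z' s * p z')) :=
        Finset.sum_le_sum fun z _ => Finset.sum_le_sum fun s _ => key z s
    _ = Real.log lam +
        ∑ z, ∑ s, p z * d z s * Real.log (d z s / ∑ z', d z' s * p z') := by
        simp_rw [mul_add, Finset.sum_add_distrib, ← Finset.sum_mul, hsum1, one_mul]
end

section
/- The map λ ↦ I_SD3(λ) is monotone nondecreasing on (0, ∞): if 0 < λ₁ ≤ λ₂ then I_SD3(λ₁) ≤ I_SD3(λ₂). -/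
open Finset Real

/-- The map `λ ↦ I_SD3(λ)` is monotone nondecreasing on `(0, ∞)`:
if `0 < λ₁ ≤ λ₂` then `I_SD3(λ₁) ≤ I_SD3(λ₂)`. -/
theorem sd3_monotone
    {Z S : Type*} [Fintype Z] [Fintype S] [Nonempty Z] [Nonempty S] [DecidableEq Z]
    (p : Z → ℝ) (d : Z → S → ℝ)
    (hp_pos : ∀ z, 0 < p z) (hp_sum : ∑ z, p z = 1)
    (hd_nonneg : ∀ z s, 0 ≤ d z s) (hd_sum : ∀ z, ∑ s, d z s = 1)
    (lam₁ lam₂ : ℝ) (hlam₁ : 0 < lam₁) (hle : lam₁ ≤ lam₂) :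
    (∑ z, ∑ s, p z * d z s *
        Real.log ((lam₁ * d z s) /
          (lam₁ * d z s * p z + ∑ z' ∈ Finset.univ \ {z}, d z' s * p z'))) ≤
      ∑ z, ∑ s, p z * d z s *
        Real.log ((lam₂ * d z s) /
          (lam₂ * d z s * p z + ∑ z' ∈ Finset.univ \ {z}, d z' s * p z')) := by
  refine Finset.sum_le_sum fun z _ => Finset.sum_le_sum fun s _ => ?_
  set R := ∑ z' ∈ Finset.univ \ {z}, d z' s * p z' with hR
  have hRnn : 0 ≤ R := Finset.sum_nonneg fun z' _ =>
    mul_nonneg (hd_nonneg z' s) (hp_pos z').le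
  rcases eq_or_lt_of_le (hd_nonneg z s) with h0 | hd
  · simp [← h0]
  · have hlam₂ : 0 < lam₂ := lt_of_lt_of_le hlam₁ hle
    have hden₁ : 0 < lam₁ * d z s * p z + R :=
      add_pos_of_pos_of_nonneg (mul_pos (mul_pos hlam₁ hd) (hp_pos z)) hRnn
    have hden₂ : 0 < lam₂ * d z s * p z + R :=
      add_pos_of_pos_of_nonneg (mul_pos (mul_pos hlam₂ hd) (hp_pos z)) hRnn
    refine mul_le_mul_of_nonneg_left (Real.log_le_log (by positivity) ?_)
      (mul_nonneg (hp_pos z).le (hd_nonneg z s))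
    rw [div_le_div_iff₀ hden₁ hden₂]
    have : lam₁ * (d z s * R) ≤ lam₂ * (d z s * R) :=
      mul_le_mul_of_nonneg_right hle (by positivity)
    nlinarith
end

section
/- For every λ > 0, I_SD3(λ) − I(S;Z) = log λ − ∑_z ∑_s p z · d z s · log( 1 + (λ − 1) · (d z s · p z) / (d z s · p z + η_z(s)) ), where η_z(s) = ∑_{z' ≠ z} d z' s · p z' and a summand is taken to be 0 whenever d z s = 0. -/
open Finset Real

/-- For every `λ > 0`,
`I_SD3(λ) − I(S;Z) = log λ − ∑_z ∑_s p z · d z s ·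
  log(1 + (λ − 1) · (d z s · p z) / (d z s · p z + η_z(s)))`,
where `η_z(s) = ∑_{z' ≠ z} d z' s · p z'`. -/
theorem sd3_sub_mutual_information_eq
    {Z S : Type*} [Fintype Z] [Fintype S] [Nonempty Z] [Nonempty S] [DecidableEq Z]
    (p : Z → ℝ) (d : Z → S → ℝ)
    (hp_pos : ∀ z, 0 < p z) (hp_sum : ∑ z, p z = 1)
    (hd_nonneg : ∀ z s, 0 ≤ d z s) (hd_sum : ∀ z, ∑ s, d z s = 1)
    (lam : ℝ) (hlam : 0 < lam) :
    (∑ z, ∑ s, p z * d z s *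
        Real.log ((lam * d z s) /
          (lam * d z s * p z + ∑ z' ∈ Finset.univ \ {z}, d z' s * p z'))) -
      (∑ z, ∑ s, p z * d z s * Real.log (d z s / ∑ z', d z' s * p z')) =
    Real.log lam -
      ∑ z, ∑ s, p z * d z s *
        Real.log (1 + (lam - 1) * (d z s * p z) /
          (d z s * p z + ∑ z' ∈ Finset.univ \ {z}, d z' s * p z')) := by
  have hlog : Real.log lam = ∑ z, ∑ s, p z * d z s * Real.log lam := by
    have : ∀ z, ∑ s, p z * d z s * Real.log lam = p z * Real.log lam := by
      intro z
      rw [← Finset.sum_mul, ← Finset.mul_sum, hd_sum, mul_one]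
    simp_rw [this]
    rw [← Finset.sum_mul, hp_sum, one_mul]
  rw [hlog, ← Finset.sum_sub_distrib, ← Finset.sum_sub_distrib]
  refine Finset.sum_congr rfl fun z _ => ?_
  rw [← Finset.sum_sub_distrib, ← Finset.sum_sub_distrib]
  refine Finset.sum_congr rfl fun s _ => ?_
  rcases eq_or_lt_of_le (hd_nonneg z s) with h0 | hd
  · simp [← h0]
  · set D := d z s with hD
    set P := p z with hP
    set η := ∑ z' ∈ Finset.univ \ {z}, d z' s * p z' with hη
    have hηnn : 0 ≤ η := Finset.sum_nonneg fun z' _ =>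
      mul_nonneg (hd_nonneg z' s) (hp_pos z').le
    have hsum : ∑ z', d z' s * p z' = D * P + η := by
      rw [hη, Finset.sum_eq_add_sum_sdiff_singleton_of_mem (Finset.mem_univ z)
        (fun z' => d z' s * p z')]
    have hDP : 0 < D * P + η := add_pos_of_pos_of_nonneg (mul_pos hd (hp_pos z)) hηnn
    have hLDP : 0 < lam * D * P + η := add_pos_of_pos_of_nonneg (mul_pos (mul_pos hlam hd) (hp_pos z)) hηnn
    have h1 : 1 + (lam - 1) * (D * P) / (D * P + η) = (lam * D * P + η) / (D * P + η) := by
      field_simp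
      ring
    rw [hsum, h1]
    have key : Real.log (lam * D / (lam * D * P + η)) - Real.log (D / (D * P + η)) =
        Real.log lam - Real.log ((lam * D * P + η) / (D * P + η)) := by
      rw [Real.log_div (by positivity) hLDP.ne', Real.log_div hd.ne' hDP.ne',
        Real.log_div hLDP.ne' hDP.ne', Real.log_mul hlam.ne' hd.ne']
      ring
    linear_combination (p z * d z s) * key
end

section
/- For every λ > 0, I_SD3(λ) ≤ H(Z), where H(Z) = −∑_z p z · log (p z) is the entropy of the skill distribution. (The SD3 density-deviation objective is bounded above by the skill entropy.) -/
open Finset Real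

/-- For every `λ > 0`, the SD3 density-deviation objective is bounded above by
the entropy of the skill distribution: `I_SD3(λ) ≤ H(Z) = −∑_z p z · log (p z)`. -/
theorem sd3_le_entropy
    {Z S : Type*} [Fintype Z] [Fintype S] [Nonempty Z] [Nonempty S] [DecidableEq Z]
    (p : Z → ℝ) (d : Z → S → ℝ)
    (hp_pos : ∀ z, 0 < p z) (hp_sum : ∑ z, p z = 1)
    (hd_nonneg : ∀ z s, 0 ≤ d z s) (hd_sum : ∀ z, ∑ s, d z s = 1)
    (lam : ℝ) (hlam : 0 < lam) :
    (∑ z, ∑ s, p z * d z s *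
        Real.log ((lam * d z s) /
          (lam * d z s * p z + ∑ z' ∈ Finset.univ \ {z}, d z' s * p z'))) ≤
      -∑ z, p z * Real.log (p z) := by
  have key : ∀ z s, p z * d z s *
      Real.log ((lam * d z s) /
        (lam * d z s * p z + ∑ z' ∈ Finset.univ \ {z}, d z' s * p z')) ≤
      p z * d z s * (-Real.log (p z)) := by
    intro z s
    rcases eq_or_lt_of_le (hd_nonneg z s) with h0 | hpos
    · simp [← h0]
    · refine mul_le_mul_of_nonneg_left ?_ (mul_nonneg (hp_pos z).le hpos.le)
      have hR : 0 ≤ ∑ z' ∈ Finset.univ \ {z}, d z' s * p z' :=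
        Finset.sum_nonneg fun z' _ => mul_nonneg (hd_nonneg z' s) (hp_pos z').le
      have hb : 0 < lam * d z s * p z := mul_pos (mul_pos hlam hpos) (hp_pos z)
      have hD : 0 < lam * d z s * p z + ∑ z' ∈ Finset.univ \ {z}, d z' s * p z' :=
        lt_of_lt_of_le hb (le_add_of_nonneg_right hR)
      have h1 : (lam * d z s) / (lam * d z s * p z + ∑ z' ∈ Finset.univ \ {z}, d z' s * p z')
          ≤ 1 / p z := by
        rw [div_le_div_iff₀ hD (hp_pos z)]
        nlinarith
      have hfpos : 0 < (lam * d z s) /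
          (lam * d z s * p z + ∑ z' ∈ Finset.univ \ {z}, d z' s * p z') :=
        div_pos (mul_pos hlam hpos) hD
      calc Real.log ((lam * d z s) /
            (lam * d z s * p z + ∑ z' ∈ Finset.univ \ {z}, d z' s * p z'))
          ≤ Real.log (1 / p z) := Real.log_le_log hfpos h1
        _ = -Real.log (p z) := by rw [one_div, Real.log_inv]
  calc (∑ z, ∑ s, p z * d z s *
        Real.log ((lam * d z s) /
          (lam * d z s * p z + ∑ z' ∈ Finset.univ \ {z}, d z' s * p z')))
      ≤ ∑ z, ∑ s, p z * d z s * (-Real.log (p z)) :=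
        Finset.sum_le_sum fun z _ => Finset.sum_le_sum fun s _ => key z s
    _ = -∑ z, p z * Real.log (p z) := by
        rw [← Finset.sum_neg_distrib]
        refine Finset.sum_congr rfl fun z _ => ?_
        rw [← Finset.sum_mul, ← Finset.mul_sum, hd_sum z]
        ring
end

section
/- Suppose that for every pair (s, z) with p z · d z s > 0 we have ∑_{z' ≠ z} d z' s = 0 (i.e. the skills have pairwise disjoint state supports). Then for every λ > 0, I_SD3(λ) = H(Z), so the SD3 objective attains its maximal value, the skill entropy. -/
open Finset Real

/-- If the skills have pairwise disjoint state supports, i.e. for every pair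
`(s, z)` with `p z · d z s > 0` we have `∑_{z' ≠ z} d z' s = 0`, then for every
`λ > 0` the SD3 objective attains its maximal value, the skill entropy:
`I_SD3(λ) = H(Z)`. -/
theorem sd3_eq_entropy_of_disjoint_supports
    {Z S : Type*} [Fintype Z] [Fintype S] [Nonempty Z] [Nonempty S] [DecidableEq Z]
    (p : Z → ℝ) (d : Z → S → ℝ)
    (hp_pos : ∀ z, 0 < p z) (hp_sum : ∑ z, p z = 1)
    (hd_nonneg : ∀ z s, 0 ≤ d z s) (hd_sum : ∀ z, ∑ s, d z s = 1)
    (hdisj : ∀ s z, 0 < p z * d z s → ∑ z' ∈ Finset.univ \ {z}, d z' s = 0)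
    (lam : ℝ) (hlam : 0 < lam) :
    (∑ z, ∑ s, p z * d z s *
        Real.log ((lam * d z s) /
          (lam * d z s * p z + ∑ z' ∈ Finset.univ \ {z}, d z' s * p z'))) =
      -∑ z, p z * Real.log (p z) := by
  have key : ∀ z s, p z * d z s *
      Real.log ((lam * d z s) /
        (lam * d z s * p z + ∑ z' ∈ Finset.univ \ {z}, d z' s * p z')) =
      p z * d z s * (-Real.log (p z)) := by
    intro z s
    rcases eq_or_lt_of_le (hd_nonneg z s) with h | h
    · simp [← h]
    · have hpos : 0 < p z * d z s := mul_pos (hp_pos z) h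
      have h0 : ∑ z' ∈ Finset.univ \ {z}, d z' s = 0 := hdisj s z hpos
      have h0' : ∑ z' ∈ Finset.univ \ {z}, d z' s * p z' = 0 := by
        apply Finset.sum_eq_zero
        intro z' hz'
        have := (Finset.sum_eq_zero_iff_of_nonneg (fun x _ => hd_nonneg x s)).mp h0 z' hz'
        simp [this]
      rw [h0', add_zero]
      have hld : lam * d z s ≠ 0 := ne_of_gt (mul_pos hlam h)
      have hpz : p z ≠ 0 := ne_of_gt (hp_pos z)
      have : (lam * d z s) / (lam * d z s * p z) = (p z)⁻¹ := by
        field_simp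
      rw [this, Real.log_inv]
  calc (∑ z, ∑ s, p z * d z s *
        Real.log ((lam * d z s) /
          (lam * d z s * p z + ∑ z' ∈ Finset.univ \ {z}, d z' s * p z')))
      = ∑ z, ∑ s, p z * d z s * (-Real.log (p z)) :=
        Finset.sum_congr rfl fun z _ => Finset.sum_congr rfl fun s _ => key z s
    _ = ∑ z, (p z * (-Real.log (p z))) * ∑ s, d z s := by
        refine Finset.sum_congr rfl fun z _ => ?_
        rw [Finset.mul_sum]
        exact Finset.sum_congr rfl fun s _ => by ring
    _ = -∑ z, p z * Real.log (p z) := by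
        rw [← Finset.sum_neg_distrib]
        exact Finset.sum_congr rfl fun z _ => by rw [hd_sum z]; ring
end
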